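/- Let λ be a partition, let (α, β) be a φ_λ-pair and let (α′, β′) be a parent of (α, β). Define ψ : ℤ → {+,−} by ψ(α) = +, ψ(β) = −, and ψ(γ) = φ_λ(γ) for all γ ≠ α, β. Then (α′, α) and (β, β′) are ψ-pairs, and β′ − β is odd. -/

import Mathlib

/-- `ε(+) = 1`, `ε(−) = −1`, encoding `+` as `true` and `−` as `false`. -/
def eps (b : Bool) : ℤ := if b then 1 else -1

/-- `(α, β)` is a `φ`-pair: `α < β`, `φ α = −`, `φ β = +`, the signs sum to zero over
`[α, β]`, and `β` is minimal with these properties. -/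
def IsPhiPair (φ : ℤ → Bool) (α β : ℤ) : Prop :=
  α < β ∧ φ α = false ∧ φ β = true ∧ (∑ γ ∈ Finset.Icc α β, eps (φ γ)) = 0 ∧
    ∀ β₀ : ℤ, α < β₀ → β₀ < β → φ β₀ = true →
      (∑ γ ∈ Finset.Icc α β₀, eps (φ γ)) ≠ 0

/-- `(α', β')` is a parent of the `φ`-pair `(α, β)`. -/
def IsParent (φ : ℤ → Bool) (α' β' α β : ℤ) : Prop :=
  IsPhiPair φ α' β' ∧ α' < α ∧ β < β' ∧
    ¬∃ α'' β'' : ℤ, IsPhiPair φ α'' β'' ∧ α'' < α ∧ β < β'' ∧ α' < α'' ∧ β'' < β'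

/-- if `(α', β')` is a parent of the `φ_λ`-pair `(α, β)` and `ψ` is obtained
from `φ_λ` by swapping the signs at `α` and `β`, then `(α', α)` and `(β, β')` are `ψ`-pairs
and `β' − β` is odd. -/
noncomputable def walk (φ : ℤ → Bool) (a c : ℤ) : ℤ := ∑ γ ∈ Finset.Icc a c, eps (φ γ)

lemma eps_one_or (b : Bool) : eps b = 1 ∨ eps b = -1 := by cases b <;> simp [eps]

lemma walk_self (φ : ℤ → Bool) (a : ℤ) : walk φ a a = eps (φ a) := by
  unfold walk; rw [Finset.Icc_self, Finset.sum_singleton]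

lemma walk_empty (φ : ℤ → Bool) {a c : ℤ} (h : c < a) : walk φ a c = 0 := by
  unfold walk; rw [Finset.Icc_eq_empty (by omega), Finset.sum_empty]

lemma walk_split (φ : ℤ → Bool) (a b c : ℤ) (h1 : a ≤ b + 1) (h2 : b ≤ c) :
    walk φ a c = walk φ a b + walk φ (b+1) c := by
  unfold walk
  rw [← Finset.sum_union]
  · congr 1
    ext x
    simp only [Finset.mem_union, Finset.mem_Icc]
    omega
  · simp only [Finset.disjoint_left, Finset.mem_Icc]
    intro x hx hx2
    omega

lemma walk_step (φ : ℤ → Bool) (a b : ℤ) (h : a ≤ b) :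
    walk φ a b = walk φ a (b-1) + eps (φ b) := by
  have h2 := walk_split φ a (b-1) b (by omega) (by omega)
  have e : b - 1 + 1 = b := by ring
  rw [e] at h2
  rw [h2, walk_self]

lemma walk_neg {φ : ℤ → Bool} {a b : ℤ} (h : IsPhiPair φ a b) :
    ∀ c, a ≤ c → c < b → walk φ a c < 0 := by
  obtain ⟨hab, hfa, hfb, hsum, hmin⟩ := h
  intro c hc
  refine Int.le_induction (motive := fun c _ => c < b → walk φ a c < 0) ?_ ?_ c hc
  · intro _; show walk φ a a < 0; rw [walk_self, hfa]; simp [eps]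
  · intro n hn ih hlt
    have h1 : walk φ a n < 0 := ih (by omega)
    have h2 := walk_step φ a (n+1) (by omega)
    have e : n + 1 - 1 = n := by ring
    rw [e] at h2
    cases hf : φ (n+1)
    · rw [hf] at h2; simp [eps] at h2; omega
    · rw [hf] at h2; simp [eps] at h2
      have h3 : walk φ a (n+1) ≠ 0 := hmin (n+1) (by omega) hlt hf
      omega

lemma walk_parity (φ : ℤ → Bool) (a : ℤ) :
    ∀ b, a ≤ b → walk φ a b % 2 = (b - a + 1) % 2 := by
  intro b hb
  refine Int.le_induction (motive := fun b _ => walk φ a b % 2 = (b - a + 1) % 2) ?_ ?_ b hb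
  · show walk φ a a % 2 = _; rw [walk_self]; rcases eps_one_or (φ a) with h|h <;> rw [h] <;> omega
  · intro n hn ih
    have h2 := walk_step φ a (n+1) (by omega)
    have e : n + 1 - 1 = n := by ring
    rw [e] at h2
    rcases eps_one_or (φ (n+1)) with h|h <;> rw [h] at h2 <;> omega

theorem stmt10' (φ : ℤ → Bool)
    (α β α' β' : ℤ)
    (hpair : IsPhiPair φ α β) (hparent : IsParent φ α' β' α β)
    (ψ : ℤ → Bool) (hψα : ψ α = true) (hψβ : ψ β = false)
    (hψ : ∀ γ : ℤ, γ ≠ α → γ ≠ β → ψ γ = φ γ) :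
    IsPhiPair ψ α' α ∧ IsPhiPair ψ β β' ∧ Odd (β' - β) := by
  obtain ⟨hpair', hα'α, hββ', hnopair⟩ := hparent
  obtain ⟨hab, hφα, hφβ, hSab, hmin⟩ := hpair
  obtain ⟨ha'b', hφα', hφβ', hSab', hmin'⟩ := hpair'
  have hT := walk_neg ⟨ha'b', hφα', hφβ', hSab', hmin'⟩
  have hU := walk_neg ⟨hab, hφα, hφβ, hSab, hmin⟩
  have hw0 : walk φ α' β' = 0 := hSab'
  have hUβ : walk φ α β = 0 := hSab
  have hTU : ∀ c, α ≤ c → walk φ α' c = walk φ α' (α-1) + walk φ α c := by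
    intro c hc
    have h2 := walk_split φ α' (α-1) c (by omega) (by omega)
    have e : α - 1 + 1 = α := by ring
    rw [e] at h2
    exact h2
  have hTm1 : walk φ α' (α-1) < 0 := hT _ (by omega) (by omega)
  -- Key step: the parent condition forces walk φ α' (α-1) = -1
  have hkey : walk φ α' (α-1) = -1 := by
    by_contra hne
    have h2 : walk φ α' (α-1) ≤ -2 := by omega
    obtain ⟨a, ⟨haα', haα, haT⟩, hamax⟩ :=
      Int.exists_greatest_of_bdd
        (P := fun z => α' ≤ z ∧ z ≤ α - 1 ∧ -1 ≤ walk φ α' (z-1))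
        ⟨α - 1, fun z hz => hz.2.1⟩
        ⟨α', le_refl _, by omega, by rw [walk_empty φ (by omega : α' - 1 < α')]; omega⟩
    have hba : ∀ γ, a ≤ γ → γ ≤ α - 1 → walk φ α' γ ≤ -2 := by
      intro γ h1g h2g
      rcases eq_or_lt_of_le h2g with rfl|hlt
      · exact h2
      · by_contra hcon
        have hP : α' ≤ γ+1 ∧ γ+1 ≤ α - 1 ∧ -1 ≤ walk φ α' (γ+1-1) := by
          have e : γ + 1 - 1 = γ := by ring
          rw [e]
          exact ⟨by omega, by omega, by omega⟩
        have := hamax (γ+1) hP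
        omega
    have haa : walk φ α' a ≤ -2 := hba a le_rfl haα
    have hstep_a := walk_step φ α' a haα'
    have hepsa := eps_one_or (φ a)
    have hTa1 : walk φ α' (a-1) = -1 := by rcases hepsa with h|h <;> omega
    have hepsa' : eps (φ a) = -1 := by rcases hepsa with h|h <;> omega
    have hφa : φ a = false := by
      cases hfa : φ a
      · rfl
      · rw [hfa] at hepsa'; simp [eps] at hepsa'
    have hTα' : walk φ α' α' = -1 := by rw [walk_self, hφα']; rfl
    have hα'a : α' < a := by
      rcases eq_or_lt_of_le haα' with h|h
      · rw [← h] at haa; omega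
      · exact h
    have hβ'1 : walk φ α' (β' - 1) = -1 := by
      have h1 := hT (β'-1) (by omega) (by omega)
      have h3 := walk_step φ α' β' (by omega)
      have h4 := eps_one_or (φ β')
      rcases h4 with h|h <;> omega
    obtain ⟨b, ⟨hab', hTb, hbβ'⟩, hbmin⟩ :=
      Int.exists_least_of_bdd
        (P := fun z => a < z ∧ walk φ α' z = -1 ∧ z ≤ β')
        ⟨a, fun z hz => le_of_lt hz.1⟩
        ⟨β' - 1, by omega, hβ'1, by omega⟩
    have hbelow : ∀ γ, a ≤ γ → γ < b → walk φ α' γ ≤ -2 := by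
      intro γ hg
      refine Int.le_induction (motive := fun γ _ => γ < b → walk φ α' γ ≤ -2) ?_ ?_ γ hg
      · intro _; exact haa
      · intro n hn ih hnb
        have h1 : walk φ α' n ≤ -2 := ih (by omega)
        have h3 := walk_step φ α' (n+1) (by omega)
        have e : n + 1 - 1 = n := by ring
        rw [e] at h3
        by_contra hcon
        have h4 : walk φ α' (n+1) = -1 := by
          rcases eps_one_or (φ (n+1)) with h|h <;> omega
        have h5 := hbmin (n+1) ⟨by omega, h4, by omega⟩
        omega
    have hβb : β < b := by
      by_contra hcon
      push_neg at hcon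
      rcases le_or_gt b (α-1) with h|h
      · have := hba b (by omega) h; omega
      · have hUb : walk φ α b ≤ 0 := by
          rcases eq_or_lt_of_le hcon with heq|hlt
          · rw [heq]; omega
          · exact le_of_lt (hU b (by omega) hlt)
        have := hTU b (by omega)
        omega
    have hb1 : walk φ α' (b-1) ≤ -2 := hbelow (b-1) (by omega) (by omega)
    have hsb := walk_step φ α' b (by omega)
    have hφb : φ b = true := by
      cases hfb : φ b
      · rw [hfb] at hsb; simp [eps] at hsb; omega
      · rfl
    have hbltβ' : b < β' := by
      have : b ≠ β' := by intro h; rw [h] at hTb; omega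
      omega
    have hsplitab : walk φ α' b = walk φ α' (a-1) + walk φ a b := by
      have h3 := walk_split φ α' (a-1) b (by omega) (by omega)
      have e : a - 1 + 1 = a := by ring
      rw [e] at h3
      exact h3
    refine hnopair ⟨a, b, ⟨by omega, hφa, hφb, ?_, ?_⟩, by omega, hβb, hα'a, hbltβ'⟩
    · show walk φ a b = 0
      omega
    · intro β₀ hb1' hb2' _
      have h3 : walk φ α' β₀ ≤ -2 := hbelow β₀ (by omega) hb2'
      have h4 := walk_split φ α' (a-1) β₀ (by omega) (by omega)
      have e : a - 1 + 1 = a := by ring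
      rw [e] at h4
      show walk φ a β₀ ≠ 0
      omega
  have hTβ : walk φ α' β = -1 := by
    have := hTU β (by omega)
    omega
  -- the ψ-sums
  have hψβ' : ψ β' = true := by rw [hψ β' (by omega) (by omega)]; exact hφβ'
  have hψα' : ψ α' = false := by rw [hψ α' (by omega) (by omega)]; exact hφα'
  have hcong1 : ∀ c, c < α → walk ψ α' c = walk φ α' c := by
    intro c hc
    unfold walk
    refine Finset.sum_congr rfl fun x hx => ?_
    have hm := Finset.mem_Icc.mp hx
    rw [hψ x (by omega) (by omega)]
  have hcong2 : ∀ c, walk ψ (β+1) c = walk φ (β+1) c := by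
    intro c
    unfold walk
    refine Finset.sum_congr rfl fun x hx => ?_
    have hm := Finset.mem_Icc.mp hx
    rw [hψ x (by omega) (by omega)]
  have hsum1 : walk ψ α' α = 0 := by
    have hs := walk_step ψ α' α (by omega)
    rw [hψα] at hs
    have he : eps true = 1 := rfl
    have hc := hcong1 (α-1) (by omega)
    omega
  have hψself : walk ψ β β = -1 := by rw [walk_self, hψβ]; rfl
  have hsum2 : walk ψ β β' = 0 := by
    have hs := walk_split ψ β β β' (by omega) (by omega)
    rw [hψself, hcong2 β'] at hs
    have hsφ := walk_split φ α' β β' (by omega) (by omega)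
    omega
  refine ⟨⟨hα'α, hψα', hψα, hsum1, ?_⟩, ⟨by omega, hψβ, hψβ', hsum2, ?_⟩, ?_⟩
  · intro β₀ h1 h2 _
    have hc := hcong1 β₀ (by omega)
    have hn := hT β₀ (by omega) (by omega)
    show walk ψ α' β₀ ≠ 0
    omega
  · intro β₀ h1 h2 _
    have hs := walk_split ψ β β β₀ (by omega) (by omega)
    rw [hψself, hcong2 β₀] at hs
    have hsφ := walk_split φ α' β β₀ (by omega) (by omega)
    have hn := hT β₀ (by omega) (by omega)
    show walk ψ β β₀ ≠ 0
    omega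
  · have hpar := walk_parity ψ β β' (by omega)
    rw [Int.odd_iff]
    omega

theorem stmt10 (lam : ℕ → ℕ)
    (hanti : ∀ i j : ℕ, 1 ≤ i → i ≤ j → lam j ≤ lam i)
    (hzero : ∃ N : ℕ, ∀ i, N ≤ i → lam i = 0)
    (φ : ℤ → Bool)
    (hφ : ∀ γ : ℤ, φ γ = false ↔ ∃ i : ℕ, 1 ≤ i ∧ γ = (lam i : ℤ) - (i : ℤ))
    (α β α' β' : ℤ)
    (hpair : IsPhiPair φ α β) (hparent : IsParent φ α' β' α β)
    (ψ : ℤ → Bool) (hψα : ψ α = true) (hψβ : ψ β = false)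
    (hψ : ∀ γ : ℤ, γ ≠ α → γ ≠ β → ψ γ = φ γ) :
    IsPhiPair ψ α' α ∧ IsPhiPair ψ β β' ∧ Odd (β' - β) := by
  exact stmt10' φ α β α' β' hpair hparent ψ hψα hψβ hψ
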